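/- arXiv:1510.02159 — 2 statements merged into one kernel-verified Lean document; each statement's English description precedes it below -/
import Mathlib

section
/- (Deterministic lasso error bound.) Let Γ̂ be a symmetric p×p matrix and γ̂ ∈ ℝ^p. Let β⋆ ∈ ℝ^p have support S of size s, and suppose: (i) restricted eigenvalue condition bᵀΓ̂b ≥ α‖b‖₂² − τ‖b‖₁² for all b ∈ ℝ^p, with sτ ≤ α/32; (ii) deviation condition ‖γ̂ − Γ̂β⋆‖_∞ ≤ λ/4 for some λ > 0. Let β̂ be any minimizer over ℝ^p of the objective β ↦ −2βᵀγ̂ + βᵀΓ̂β + λ‖β‖₁. Then ‖β̂ − β⋆‖₂ ≤ 16√s · λ / α. -/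
open Finset Matrix

noncomputable def l1 {n : ℕ} (v : Fin n → ℝ) : ℝ := ∑ i, |v i|
noncomputable def l2 {n : ℕ} (v : Fin n → ℝ) : ℝ := Real.sqrt (∑ i, (v i) ^ 2)
noncomputable def linf {n : ℕ} (v : Fin n → ℝ) : ℝ := ⨆ i, |v i|

set_option maxHeartbeats 1000000 in
theorem stmt_2 {p : ℕ} (Gam : Matrix (Fin p) (Fin p) ℝ) (hGam : Gam.IsSymm)
    (γ βstar βhat : Fin p → ℝ) (α τ lam : ℝ) (hα : 0 < α) (hτ : 0 < τ) (hlam : 0 < lam)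
    (s : ℕ) (hs : (Finset.univ.filter fun i => βstar i ≠ 0).card = s)
    (hsτ : (s : ℝ) * τ ≤ α / 32)
    (hRE : ∀ b : Fin p → ℝ, b ⬝ᵥ Gam.mulVec b ≥ α * l2 b ^ 2 - τ * l1 b ^ 2)
    (hdev : linf (fun i => γ i - Gam.mulVec βstar i) ≤ lam / 4)
    (hmin : ∀ β : Fin p → ℝ,
      -2 * (βhat ⬝ᵥ γ) + βhat ⬝ᵥ Gam.mulVec βhat + lam * l1 βhat ≤
      -2 * (β ⬝ᵥ γ) + β ⬝ᵥ Gam.mulVec β + lam * l1 β) :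
    l2 (βhat - βstar) ≤ 16 * Real.sqrt s * lam / α := by
  -- symmetry of the bilinear form
  have hsym : ∀ x y : Fin p → ℝ, x ⬝ᵥ Gam.mulVec y = y ⬝ᵥ Gam.mulVec x := by
    intro x y
    simp only [dotProduct, mulVec, Finset.mul_sum]
    rw [Finset.sum_comm]
    refine Finset.sum_congr rfl fun i _ => Finset.sum_congr rfl fun j _ => ?_
    rw [hGam.apply i j]; ring
  set Δ : Fin p → ℝ := βhat - βstar with hΔ
  have hΔi : ∀ i, Δ i = βhat i - βstar i := fun i => rfl
  set S : Finset (Fin p) := Finset.univ.filter (fun i => βstar i ≠ 0) with hS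
  set L : ℝ := l1 Δ with hLdef
  set E : ℝ := l2 Δ with hEdef
  set D : ℝ := ∑ i ∈ S, |Δ i| with hDdef
  have hE0 : 0 ≤ E := Real.sqrt_nonneg _
  have hL0 : 0 ≤ L := Finset.sum_nonneg fun i _ => abs_nonneg _
  have hD0 : 0 ≤ D := Finset.sum_nonneg fun i _ => abs_nonneg _
  have hE2 : E ^ 2 = ∑ i, (Δ i) ^ 2 := by
    rw [hEdef]
    exact Real.sq_sqrt (Finset.sum_nonneg fun i _ => sq_nonneg _)
  -- l1 triangle ineq for x + t • y, t ≥ 0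
  have hl1tri : ∀ (x y : Fin p → ℝ) (t : ℝ), 0 ≤ t → l1 (x + t • y) ≤ l1 x + t * l1 y := by
    intro x y t ht
    unfold l1
    rw [Finset.mul_sum, ← Finset.sum_add_distrib]
    refine Finset.sum_le_sum fun i _ => ?_
    simp only [Pi.add_apply, Pi.smul_apply, smul_eq_mul]
    calc |x i + t * y i| ≤ |x i| + |t * y i| := abs_add_le _ _
      _ = |x i| + t * |y i| := by rw [abs_mul, abs_of_nonneg ht]
  -- positive semidefiniteness from existence of a minimizer
  have hpsd : ∀ b : Fin p → ℝ, 0 ≤ b ⬝ᵥ Gam.mulVec b := by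
    intro b
    by_contra hneg
    push_neg at hneg
    set v : ℝ := b ⬝ᵥ Gam.mulVec b with hv
    set C : ℝ := 2 * (b ⬝ᵥ Gam.mulVec βhat) - 2 * (b ⬝ᵥ γ) + lam * l1 b with hC
    have key : ∀ t : ℝ, 0 < t → 0 ≤ t * v + C := by
      intro t ht
      have h := hmin (βhat + t • b)
      have hl1 := hl1tri βhat b t ht.le
      have hexp : (βhat + t • b) ⬝ᵥ Gam.mulVec (βhat + t • b)
          = βhat ⬝ᵥ Gam.mulVec βhat + 2 * t * (b ⬝ᵥ Gam.mulVec βhat) + t ^ 2 * v := by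
        simp only [mulVec_add, mulVec_smul, dotProduct_add, add_dotProduct,
          dotProduct_smul, smul_dotProduct, smul_eq_mul, hv]
        rw [hsym βhat b]
        ring
      have hdot : (βhat + t • b) ⬝ᵥ γ = βhat ⬝ᵥ γ + t * (b ⬝ᵥ γ) := by
        simp [add_dotProduct, smul_dotProduct, smul_eq_mul]
      rw [hexp, hdot] at h
      have hlam1 : lam * l1 (βhat + t • b) ≤ lam * (l1 βhat + t * l1 b) :=
        mul_le_mul_of_nonneg_left hl1 hlam.le
      nlinarith [h, hlam1, ht, sq_nonneg t]
    have ht : (0:ℝ) < (|C| + 1) / (-v) :=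
      div_pos (by positivity) (neg_pos.mpr hneg)
    have h2 := key _ ht
    have h3 : (|C| + 1) / (-v) * v = -(|C| + 1) := by
      rw [div_mul_eq_mul_div, div_neg, mul_div_assoc, div_self hneg.ne, mul_one]
    rw [h3] at h2
    have := le_abs_self C
    linarith
  -- deviation per coordinate
  have hdev' : (⨆ i, |γ i - Gam.mulVec βstar i| : ℝ) ≤ lam / 4 := hdev
  have hei : ∀ i, |γ i - Gam.mulVec βstar i| ≤ lam / 4 := by
    intro i
    refine le_trans ?_ hdev'
    exact le_ciSup (f := fun i => |γ i - Gam.mulVec βstar i|)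
      (Set.Finite.bddAbove (Set.finite_range _)) i
  -- bound on Δ ⬝ᵥ (γ - Γβ⋆)
  have hΔe : Δ ⬝ᵥ (γ - Gam.mulVec βstar) ≤ lam / 4 * L := by
    rw [hLdef]
    unfold l1
    rw [Finset.mul_sum]
    refine Finset.sum_le_sum fun i _ => ?_
    have h1 : Δ i * (γ - Gam.mulVec βstar) i ≤ |Δ i| * |γ i - Gam.mulVec βstar i| := by
      rw [← abs_mul]
      exact le_abs_self _
    calc Δ i * (γ - Gam.mulVec βstar) i ≤ |Δ i| * |γ i - Gam.mulVec βstar i| := h1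
      _ ≤ |Δ i| * (lam / 4) := mul_le_mul_of_nonneg_left (hei i) (abs_nonneg _)
      _ = lam / 4 * |Δ i| := by ring
  -- basic inequality
  have hbase := hmin βstar
  have hAeq : Δ ⬝ᵥ Gam.mulVec Δ
      = βhat ⬝ᵥ Gam.mulVec βhat - 2 * (βhat ⬝ᵥ Gam.mulVec βstar) + βstar ⬝ᵥ Gam.mulVec βstar := by
    rw [hΔ]
    simp only [mulVec_sub, dotProduct_sub, sub_dotProduct]
    rw [hsym βstar βhat]
    ring
  have hΔee : Δ ⬝ᵥ (γ - Gam.mulVec βstar)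
      = βhat ⬝ᵥ γ - βstar ⬝ᵥ γ - (βhat ⬝ᵥ Gam.mulVec βstar) + βstar ⬝ᵥ Gam.mulVec βstar := by
    rw [hΔ]
    simp only [dotProduct_sub, sub_dotProduct]
    ring
  have hbasic : Δ ⬝ᵥ Gam.mulVec Δ
      ≤ 2 * (Δ ⬝ᵥ (γ - Gam.mulVec βstar)) + lam * (l1 βstar - l1 βhat) := by
    rw [hAeq, hΔee]; linarith
  -- l1 split
  have hsplit : l1 βstar - l1 βhat ≤ 2 * D - L := by
    have h1 : ∀ i, |βstar i| - |βhat i| ≤ (if βstar i ≠ 0 then 2 * |Δ i| else 0) - |Δ i| := by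
      intro i
      by_cases hi : βstar i = 0
      · have h0 : |βstar i| = 0 := by rw [hi, abs_zero]
        have hd : Δ i = βhat i := by rw [hΔi i, hi, sub_zero]
        rw [if_neg (not_not_intro hi), h0, hd]
      · have : |βstar i| - |βhat i| ≤ |Δ i| := by
          rw [hΔi i, abs_sub_comm]
          exact abs_sub_abs_le_abs_sub _ _
        simp only [hi, ne_eq, not_false_eq_true, if_pos]
        linarith
    have h2 : ∑ i, ((if βstar i ≠ 0 then 2 * |Δ i| else 0) - |Δ i|) = 2 * D - L := by
      rw [Finset.sum_sub_distrib]
      congr 1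
      · rw [hDdef, hS, Finset.mul_sum, Finset.sum_filter]
    calc l1 βstar - l1 βhat = ∑ i, (|βstar i| - |βhat i|) := by
          unfold l1; rw [Finset.sum_sub_distrib]
      _ ≤ ∑ i, ((if βstar i ≠ 0 then 2 * |Δ i| else 0) - |Δ i|) :=
          Finset.sum_le_sum fun i _ => h1 i
      _ = 2 * D - L := h2
  -- Cauchy-Schwarz: D ≤ √s * E
  have hDE : D ≤ Real.sqrt s * E := by
    have hcs : D ^ 2 ≤ (s : ℝ) * ∑ i ∈ S, (Δ i) ^ 2 := by
      have := sq_sum_le_card_mul_sum_sq (s := S) (f := fun i => |Δ i|)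
      simp only [sq_abs] at this
      rw [hDdef]
      calc (∑ i ∈ S, |Δ i|) ^ 2 ≤ (S.card : ℝ) * ∑ i ∈ S, (Δ i) ^ 2 := by exact_mod_cast this
        _ = (s : ℝ) * ∑ i ∈ S, (Δ i) ^ 2 := by rw [hS, hs]
    have hsub : ∑ i ∈ S, (Δ i) ^ 2 ≤ ∑ i, (Δ i) ^ 2 :=
      Finset.sum_le_sum_of_subset_of_nonneg (Finset.subset_univ S) (fun i _ _ => sq_nonneg _)
    have hsq2 : D ^ 2 ≤ ((Real.sqrt s) * E) ^ 2 := by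
      rw [mul_pow, Real.sq_sqrt (Nat.cast_nonneg s), hE2]
      calc D ^ 2 ≤ (s : ℝ) * ∑ i ∈ S, (Δ i) ^ 2 := hcs
        _ ≤ (s : ℝ) * ∑ i, (Δ i) ^ 2 :=
          mul_le_mul_of_nonneg_left hsub (Nat.cast_nonneg s)
    have h2 : 0 ≤ Real.sqrt s * E := mul_nonneg (Real.sqrt_nonneg _) hE0
    calc D = Real.sqrt (D ^ 2) := (Real.sqrt_sq hD0).symm
      _ ≤ Real.sqrt ((Real.sqrt s * E) ^ 2) := Real.sqrt_le_sqrt hsq2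
      _ = Real.sqrt s * E := Real.sqrt_sq h2
  -- combine
  have hA0 : 0 ≤ Δ ⬝ᵥ Gam.mulVec Δ := hpsd Δ
  have hRE' := hRE Δ
  have hmain : Δ ⬝ᵥ Gam.mulVec Δ ≤ 2 * lam * D - lam / 2 * L := by
    have := mul_le_mul_of_nonneg_left hsplit hlam.le
    linarith [hbasic, hΔe]
  have hcone : L ≤ 4 * D := by
    have h1 : 0 ≤ 2 * lam * D - lam / 2 * L := le_trans hA0 hmain
    nlinarith
  have hsq : α * E ^ 2 - τ * L ^ 2 ≤ 2 * lam * D := by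
    have h0 : 0 ≤ lam / 2 * L := mul_nonneg (by linarith) hL0
    linarith [hmain, hRE']
  have hDs : D ^ 2 ≤ (s : ℝ) * E ^ 2 := by
    have hmm := mul_le_mul hDE hDE hD0 (mul_nonneg (Real.sqrt_nonneg _) hE0)
    have hq : Real.sqrt s * E * (Real.sqrt s * E) = (s : ℝ) * E ^ 2 := by
      rw [show Real.sqrt (s:ℝ) * E * (Real.sqrt (s:ℝ) * E)
            = Real.sqrt (s:ℝ) * Real.sqrt (s:ℝ) * (E * E) by ring,
        Real.mul_self_sqrt (Nat.cast_nonneg s)]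
      ring
    calc D ^ 2 = D * D := by ring
      _ ≤ Real.sqrt s * E * (Real.sqrt s * E) := hmm
      _ = (s : ℝ) * E ^ 2 := hq
  have hτL : τ * L ^ 2 ≤ α / 2 * E ^ 2 := by
    have hL2 : L ^ 2 ≤ 16 * D ^ 2 := by nlinarith [hcone, hL0, hD0]
    have hstep1 : τ * L ^ 2 ≤ τ * (16 * D ^ 2) := mul_le_mul_of_nonneg_left hL2 hτ.le
    have hstep2 : τ * (16 * D ^ 2) ≤ τ * (16 * ((s : ℝ) * E ^ 2)) :=
      mul_le_mul_of_nonneg_left (by linarith) hτ.le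
    have hstep4 : (s : ℝ) * τ * E ^ 2 ≤ α / 32 * E ^ 2 :=
      mul_le_mul_of_nonneg_right hsτ (sq_nonneg E)
    nlinarith [hstep1, hstep2, hstep4]
  have hfin : α / 2 * E ^ 2 ≤ 2 * lam * (Real.sqrt s * E) := by
    have := mul_le_mul_of_nonneg_left hDE (by linarith : (0:ℝ) ≤ 2 * lam)
    linarith [hsq, hτL]
  show E ≤ 16 * Real.sqrt s * lam / α
  rw [le_div_iff₀ hα]
  rcases eq_or_lt_of_le hE0 with h | h
  · rw [← h, zero_mul]
    positivity
  · have hf2 : (α / 2 * E) * E ≤ (2 * lam * Real.sqrt s) * E := by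
      calc (α / 2 * E) * E = α / 2 * E ^ 2 := by ring
        _ ≤ 2 * lam * (Real.sqrt s * E) := hfin
        _ = (2 * lam * Real.sqrt s) * E := by ring
    have hcancel : α / 2 * E ≤ 2 * lam * Real.sqrt s := le_of_mul_le_mul_right hf2 h
    have hnn : 0 ≤ Real.sqrt (s:ℝ) * lam := mul_nonneg (Real.sqrt_nonneg _) hlam.le
    nlinarith [hcancel, hnn]
end

section
/- (Basic inequality and cone condition for the lasso.) Under the setting of the deterministic lasso error bound: let v = β̂ − β⋆, and let v_S, v_{S^c} denote the restrictions of v to the support S of β⋆ and its complement. If ‖γ̂ − Γ̂β⋆‖_∞ ≤ λ/4 and β̂ minimizes β ↦ −2βᵀγ̂ + βᵀΓ̂β + λ‖β‖₁ over ℝ^p with Γ̂ positive semidefinite on the cone {v : ‖v_{S^c}‖₁ ≤ 3‖v_S‖₁}, then 0 ≤ vᵀΓ̂v ≤ (3λ/2)‖v_S‖₁ − (λ/2)‖v_{S^c}‖₁, and consequently ‖v_{S^c}‖₁ ≤ 3‖v_S‖₁. -/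
open Finset Matrix

def restrict {n : ℕ} (S : Finset (Fin n)) (v : Fin n → ℝ) : Fin n → ℝ :=
  fun i => if i ∈ S then v i else 0

theorem stmt_3 {p : ℕ} (Gam : Matrix (Fin p) (Fin p) ℝ) (hGam : Gam.IsSymm)
    (γ βstar βhat : Fin p → ℝ) (lam : ℝ) (hlam : 0 < lam)
    (S : Finset (Fin p)) (hS : ∀ i, βstar i ≠ 0 ↔ i ∈ S)
    (hdev : linf (fun i => γ i - Gam.mulVec βstar i) ≤ lam / 4)
    (hpsd : ∀ w : Fin p → ℝ, l1 (restrict Sᶜ w) ≤ 3 * l1 (restrict S w) →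
      0 ≤ w ⬝ᵥ Gam.mulVec w)
    (hmin : ∀ β : Fin p → ℝ,
      -2 * (βhat ⬝ᵥ γ) + βhat ⬝ᵥ Gam.mulVec βhat + lam * l1 βhat ≤
      -2 * (β ⬝ᵥ γ) + β ⬝ᵥ Gam.mulVec β + lam * l1 β) :
    (0 ≤ (βhat - βstar) ⬝ᵥ Gam.mulVec (βhat - βstar) ∧
      (βhat - βstar) ⬝ᵥ Gam.mulVec (βhat - βstar) ≤
        3 * lam / 2 * l1 (restrict S (βhat - βstar)) -
          lam / 2 * l1 (restrict Sᶜ (βhat - βstar))) ∧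
    l1 (restrict Sᶜ (βhat - βstar)) ≤ 3 * l1 (restrict S (βhat - βstar)) := by
  set v : Fin p → ℝ := βhat - βstar with hvdef
  have hβhat : βhat = βstar + v := by funext i; simp [hvdef]
  -- symmetry of the bilinear form
  have sym : ∀ a b : Fin p → ℝ, a ⬝ᵥ Gam.mulVec b = b ⬝ᵥ Gam.mulVec a := by
    intro a b
    rw [Matrix.dotProduct_mulVec, ← Matrix.mulVec_transpose, hGam.eq]
    exact dotProduct_comm _ _
  -- quadratic expansion
  have expand : ∀ t : ℝ, (βstar + t • v) ⬝ᵥ Gam.mulVec (βstar + t • v) =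
      βstar ⬝ᵥ Gam.mulVec βstar + 2 * t * (v ⬝ᵥ Gam.mulVec βstar)
        + t ^ 2 * (v ⬝ᵥ Gam.mulVec v) := by
    intro t
    simp only [Matrix.mulVec_add, Matrix.mulVec_smul, add_dotProduct,
      dotProduct_add, dotProduct_smul, smul_dotProduct,
      smul_eq_mul]
    rw [sym βstar v]
    ring
  have expand2 : ∀ t : ℝ, (βstar + t • v) ⬝ᵥ γ = βstar ⬝ᵥ γ + t * (v ⬝ᵥ γ) := by
    intro t
    rw [add_dotProduct, smul_dotProduct, smul_eq_mul]
  -- l1 facts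
  have l1_nonneg : ∀ w : Fin p → ℝ, 0 ≤ l1 w := by
    intro w
    exact Finset.sum_nonneg fun i _ => abs_nonneg _
  have l1_split : l1 v = l1 (restrict S v) + l1 (restrict Sᶜ v) := by
    unfold l1
    rw [← Finset.sum_add_distrib]
    refine Finset.sum_congr rfl fun i _ => ?_
    have hrs : _root_.restrict S v i = if i ∈ S then v i else 0 := rfl
    have hrc : _root_.restrict Sᶜ v i = if i ∈ S then 0 else v i := by
      simp [_root_.restrict, Finset.mem_compl]
    by_cases hi : i ∈ S
    · simp [hrs, hrc, hi]
    · simp [hrs, hrc, hi]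
  -- Hölder
  have holder : v ⬝ᵥ (fun i => γ i - Gam.mulVec βstar i) ≤ lam / 4 * l1 v := by
    unfold dotProduct l1
    rw [Finset.mul_sum]
    refine Finset.sum_le_sum fun i _ => ?_
    have h1 : |γ i - Gam.mulVec βstar i| ≤ lam / 4 := by
      refine le_trans ?_ hdev
      exact le_ciSup (f := fun j => |γ j - Gam.mulVec βstar j|)
        (Set.Finite.bddAbove (Set.finite_range _)) i
    calc v i * (γ i - Gam.mulVec βstar i) ≤ |v i * (γ i - Gam.mulVec βstar i)| := le_abs_self _
      _ = |v i| * |γ i - Gam.mulVec βstar i| := abs_mul _ _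
      _ ≤ |v i| * (lam / 4) := by
          exact mul_le_mul_of_nonneg_left h1 (abs_nonneg _)
      _ = lam / 4 * |v i| := by ring
  have hdot : v ⬝ᵥ (fun i => γ i - Gam.mulVec βstar i) =
      v ⬝ᵥ γ - v ⬝ᵥ Gam.mulVec βstar := by
    unfold dotProduct
    rw [← Finset.sum_sub_distrib]
    exact Finset.sum_congr rfl fun i _ => by ring
  -- triangle inequality for the penalty difference
  have pen : l1 βstar - l1 βhat ≤ l1 (restrict S v) - l1 (restrict Sᶜ v) := by
    unfold l1
    rw [← Finset.sum_sub_distrib, ← Finset.sum_sub_distrib]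
    refine Finset.sum_le_sum fun i _ => ?_
    have hβ : βhat i = βstar i + v i := by rw [hβhat]; rfl
    have hrs : _root_.restrict S v i = if i ∈ S then v i else 0 := rfl
    have hrc : _root_.restrict Sᶜ v i = if i ∈ S then 0 else v i := by
      simp [_root_.restrict, Finset.mem_compl]
    by_cases hi : i ∈ S
    · have h2 : |βstar i| - |βhat i| ≤ |v i| := by
        have h3 := abs_sub_abs_le_abs_sub (βstar i) (βhat i)
        have h4 : |βstar i - βhat i| = |v i| := by
          rw [hβ]; rw [show βstar i - (βstar i + v i) = -(v i) by ring, abs_neg]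
        linarith
      simp only [hrs, hrc, hi, if_pos, if_neg]
      simpa using h2
    · have hz : βstar i = 0 := by
        by_contra h
        exact hi ((hS i).mp h)
      simp [hrs, hrc, hi, hβ, hz]
  -- l1 triangle with scaling, for the coercivity argument
  have l1_smul_add : ∀ t : ℝ, 0 ≤ t → l1 (βstar + t • v) ≤ l1 βstar + t * l1 v := by
    intro t ht
    unfold l1
    rw [Finset.mul_sum, ← Finset.sum_add_distrib]
    refine Finset.sum_le_sum fun i _ => ?_
    have : |βstar i + t * v i| ≤ |βstar i| + |t * v i| := abs_add_le _ _
    rw [abs_mul, abs_of_nonneg ht] at this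
    simpa using this
  set c : ℝ := v ⬝ᵥ Gam.mulVec v with hc
  set a : ℝ := l1 (restrict S v) with ha
  set b : ℝ := l1 (restrict Sᶜ v) with hb
  -- basic inequality
  have basic : c ≤ 3 * lam / 2 * a - lam / 2 * b := by
    have h1 := hmin βstar
    have hb1 : βstar + (1:ℝ) • v = βhat := by rw [hβhat]; simp
    have e1 : βhat ⬝ᵥ Gam.mulVec βhat =
        βstar ⬝ᵥ Gam.mulVec βstar + 2 * 1 * (v ⬝ᵥ Gam.mulVec βstar)
          + 1 ^ 2 * (v ⬝ᵥ Gam.mulVec v) := by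
      rw [← hb1]; exact expand 1
    have e2 : βhat ⬝ᵥ γ = βstar ⬝ᵥ γ + 1 * (v ⬝ᵥ γ) := by
      rw [← hb1]; exact expand2 1
    rw [e1, e2] at h1
    have h2 : c ≤ 2 * (v ⬝ᵥ γ - v ⬝ᵥ Gam.mulVec βstar) + lam * (l1 βstar - l1 βhat) := by
      simp only [hc]; nlinarith [h1]
    rw [← hdot] at h2
    have h3 : c ≤ 2 * (lam / 4 * l1 v) + lam * (a - b) := by
      have := mul_le_mul_of_nonneg_left pen (le_of_lt hlam)
      linarith [holder, this]
    rw [l1_split] at h3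
    linarith [h3]
  -- nonnegativity of the quadratic form via unboundedness
  have hc0 : 0 ≤ c := by
    by_contra hneg
    push_neg at hneg
    set A : ℝ := -2 * (v ⬝ᵥ γ) + 2 * (v ⬝ᵥ Gam.mulVec βstar) + lam * l1 v with hA
    set K : ℝ := (-2 * (βhat ⬝ᵥ γ) + βhat ⬝ᵥ Gam.mulVec βhat + lam * l1 βhat)
      - (-2 * (βstar ⬝ᵥ γ) + βstar ⬝ᵥ Gam.mulVec βstar + lam * l1 βstar) with hK
    have key : ∀ t : ℝ, 0 ≤ t → K ≤ t * A + t ^ 2 * c := by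
      intro t ht
      have h1 := hmin (βstar + t • v)
      rw [expand t, expand2 t] at h1
      have h2 := mul_le_mul_of_nonneg_left (l1_smul_add t ht) (le_of_lt hlam)
      simp only [hK, hA]
      nlinarith [h1, h2]
    set t : ℝ := max 1 ((|A| + |K| + 1) / (-c)) with htd
    have ht1 : (1:ℝ) ≤ t := le_max_left _ _
    have ht2 : (|A| + |K| + 1) / (-c) ≤ t := le_max_right _ _
    have htc : t * c ≤ -(|A| + |K| + 1) := by
      have hcpos : 0 < -c := by linarith
      rw [div_le_iff₀ hcpos] at ht2
      nlinarith [ht2]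
    have hAt : A + t * c ≤ -(|K| + 1) := by
      have := le_abs_self A
      linarith
    have ht0 : 0 ≤ t := by linarith
    have hkey := key t ht0
    have hKabs := neg_abs_le K
    have hAtneg : A + t * c ≤ 0 := by
      have := abs_nonneg K
      linarith
    have hprod : 0 ≤ (t - 1) * (-(A + t * c)) :=
      mul_nonneg (by linarith) (by linarith)
    nlinarith [hkey, hAt, hKabs, hprod]
  refine ⟨⟨hc0, basic⟩, ?_⟩
  nlinarith [hc0, basic, hlam]
end
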